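/- arXiv:1409.5212 — 3 statements merged into one kernel-verified Lean document; each statement's English description precedes it below -/
import Mathlib

section
/- Let H₁ and H₂ be complex Hilbert spaces, and let R_s ⊆ R be subspaces of H₂ with R_s dense in H₂. Assume: (i) R carries a norm ‖·‖_R for which there exists c > 0 with ‖u‖_{H₂} ≤ c‖u‖_R for all u ∈ R; let R' denote the continuous dual space of (R, ‖·‖_R), and let ι : H₂ → R' be the map sending z ∈ H₂ to the functional v ↦ ⟨z, v⟩_{H₂} on R (which is bounded by (i)); (ii) there is a pairing ⟨·,·⟩ : R' × R → ℂ, linear in the first variable and continuous in each variable separately, which extends the H₂-inner product in the sense that ⟨ι(z), v⟩ = ⟨z, v⟩_{H₂} for all z ∈ H₂ and v ∈ R; (iii) T is an unbounded operator from H₁ to H₂ and T̃ : H₁ → R' is an everywhere-defined linear map with T̃u = ι(Tu) for all u ∈ D(T); (iv) S is an unbounded operator from H₂ to H₁ with R_s ⊆ D(S) ⊆ R, and D(S) is dense both in (H₂, ‖·‖_{H₂}) and in (R, ‖·‖_R); (v) ⟨u, Sv⟩_{H₁} = ⟨T̃u, v⟩ for all u ∈ H₁ and v ∈ D(S). Then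 the domain of the adjoint S* satisfies D(S*) = {u ∈ H₁ : T̃u ∈ ι(H₂)}, i.e. u ∈ D(S*) if and only if there exists z ∈ H₂ with T̃u = ι(z). -/
/-- **Abstract adjoint-domain lemma** (Lemma 3.1 of the paper).

Let `H₁` and `H₂` be complex Hilbert spaces.  The subspace `R ⊆ H₂`, equipped with its own
norm `‖·‖_R`, is realised as the range of an injective linear map `j : W →ₗ[ℂ] H₂` from a
normed space `W` (so the norm of `W` is `‖·‖_R`), and its continuous dual `R'` is
`NormedSpace.Dual ℂ W`; the pairing `⟨·,·⟩ : R' × R → ℂ` is the canonical evaluation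
pairing, which is linear in the first variable and continuous in each variable separately.

Assume:
* (i)  there is `c > 0` with `‖u‖_{H₂} ≤ c ‖u‖_R` for `u ∈ R`, i.e. `‖j w‖ ≤ c‖w‖`;
* `ι : H₂ → R'` sends `z` to the functional `v ↦ ⟪z, v⟫_{H₂}` on `R` (bounded by (i));
* (ii) the evaluation pairing extends the `H₂`-inner product: `⟨ι z, v⟩ = ⟪z, v⟫_{H₂}`
  for `z ∈ H₂`, `v ∈ R` (hypothesis `hι`);
* (iii) `T` is an unbounded operator from `H₁` to `H₂` and `T̃ : H₁ → R'` is an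
  everywhere-defined (conjugate-)linear map with `T̃ u = ι (T u)` for `u ∈ D(T)`;
* `R_s ⊆ R` is a subspace of `H₂` that is dense in `H₂`;
* (iv) `S` is an unbounded operator from `H₂` to `H₁` with `R_s ⊆ D(S) ⊆ R`, and `D(S)` is
  dense both in `(H₂, ‖·‖_{H₂})` and in `(R, ‖·‖_R)`;
* (v)  `⟪u, S v⟫_{H₁} = ⟨T̃ u, v⟩` for all `u ∈ H₁` and `v ∈ D(S)`.

Then `D(S*) = {u ∈ H₁ : T̃ u ∈ ι(H₂)}`, i.e. `u ∈ D(S*)` iff `T̃ u = ι z` for some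
`z ∈ H₂`. -/
theorem adjoint_domain_eq {H₁ H₂ W : Type*}
    [NormedAddCommGroup H₁] [InnerProductSpace ℂ H₁] [CompleteSpace H₁]
    [NormedAddCommGroup H₂] [InnerProductSpace ℂ H₂] [CompleteSpace H₂]
    [NormedAddCommGroup W] [NormedSpace ℂ W]
    (j : W →ₗ[ℂ] H₂) (hj : Function.Injective j)
    -- (i)
    (c : ℝ) (hc : 0 < c) (hjc : ∀ w : W, ‖j w‖ ≤ c * ‖w‖)
    -- the map `ι : H₂ → R'`
    (ι : H₂ → StrongDual ℂ W)
    -- (ii): the pairing extends the `H₂`-inner product via `ι`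
    (hι : ∀ (z : H₂) (w : W), ι z w = inner ℂ z (j w))
    -- (iii)
    (T : H₁ →ₗ.[ℂ] H₂) (Tt : H₁ →ₗ⋆[ℂ] StrongDual ℂ W)
    (hTt : ∀ u : T.domain, Tt u = ι (T u))
    -- `R_s`: a subspace of `H₂`, contained in `R`, dense in `H₂`
    (Rs : Submodule ℂ H₂)
    (hRs_dense : Dense (Rs : Set H₂))
    (hRsR : (Rs : Set H₂) ⊆ Set.range j)
    -- (iv)
    (S : H₂ →ₗ.[ℂ] H₁)
    (hRsS : Rs ≤ S.domain)
    (hSR : (S.domain : Set H₂) ⊆ Set.range j)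
    (hS_dense : Dense (S.domain : Set H₂))
    (hS_denseR : Dense (j ⁻¹' (S.domain : Set H₂)))
    -- (v)
    (hpair : ∀ (u : H₁) (w : W) (hw : j w ∈ S.domain),
      (inner ℂ u (S ⟨j w, hw⟩) : ℂ) = Tt u w) :
    ∀ u : H₁, u ∈ S.adjoint.domain ↔ ∃ z : H₂, Tt u = ι z := by
  intro u
  constructor
  · intro hu
    refine ⟨S.adjoint ⟨u, hu⟩, ?_⟩
    apply ContinuousLinearMap.coeFn_injective
    refine Continuous.ext_on hS_denseR (Tt u).continuous (ι (S.adjoint ⟨u, hu⟩)).continuous ?_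
    intro w hw
    have h1 := (S.adjoint_isFormalAdjoint hS_dense) ⟨u, hu⟩ ⟨j w, hw⟩
    have h2 := hpair u w hw
    have h3 := hι (S.adjoint ⟨u, hu⟩) w
    simp only [ContinuousLinearMap.coe_coe] at *
    rw [h3, ← h2]
    exact h1.symm
  · rintro ⟨z, hz⟩
    apply LinearPMap.mem_adjoint_domain_of_exists
    refine ⟨z, fun v => ?_⟩
    obtain ⟨w, hw⟩ := hSR v.2
    have hwd : j w ∈ S.domain := hw ▸ v.2
    have hv : v = ⟨j w, hwd⟩ := Subtype.ext hw.symm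
    rw [hv]
    rw [hpair u w hwd, hz, hι]
end

section
/- Let T and S be closed densely defined unbounded operators from H₁ to H₂ with T ⊆ S. If the operator T*S (with domain {u ∈ D(S) : Su ∈ D(T*)}) is self-adjoint, then T*T = T*S = S*S; consequently D(T) = D(S) and T = S. -/
/-- Composition of two partially defined linear operators `g ∘ f` with the natural
domain `{x ∈ D(f) : f x ∈ D(g)}`, acting by `x ↦ g (f x)`. -/
noncomputable def LinearPMap.pcomp {R E F G : Type*} [CommRing R]
    [AddCommGroup E] [Module R E] [AddCommGroup F] [Module R F]
    [AddCommGroup G] [Module R G] (g : F →ₗ.[R] G) (f : E →ₗ.[R] F) :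
    E →ₗ.[R] G :=
  g.comp (f.domRestrict ((Submodule.comap f.toFun g.domain).map f.domain.subtype))
    (fun x => by
      obtain ⟨hxD, hxf⟩ := x.2
      obtain ⟨y, hy, hyx⟩ := hxD
      have hx : f.domRestrict _ x = f y := LinearPMap.domRestrict_apply hyx.symm
      rw [hx]
      exact hy)

set_option linter.unusedSectionVars false

open LinearPMap

local notation "⟪" x ", " y "⟫" => @inner ℂ _ _ x y

namespace GaffneyAux

section Pcomp

variable {R E F G : Type*} [CommRing R] [AddCommGroup E] [Module R E]
  [AddCommGroup F] [Module R F] [AddCommGroup G] [Module R G]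
  {g : F →ₗ.[R] G} {f : E →ₗ.[R] F}

theorem mem_pcomp_iff {x : E} :
    x ∈ (g.pcomp f).domain ↔ ∃ hx : x ∈ f.domain, f ⟨x, hx⟩ ∈ g.domain := by
  have hdom : (g.pcomp f).domain
      = ((Submodule.comap f.toFun g.domain).map f.domain.subtype) ⊓ f.domain := rfl
  rw [hdom, Submodule.mem_inf]
  constructor
  · rintro ⟨hD, hxf⟩
    refine ⟨hxf, ?_⟩
    obtain ⟨y, hy, hyx⟩ := Submodule.mem_map.mp hD
    have : (⟨x, hxf⟩ : f.domain) = y := Subtype.ext hyx.symm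
    rw [this]
    exact hy
  · rintro ⟨hx, hgx⟩
    exact ⟨Submodule.mem_map.mpr ⟨⟨x, hx⟩, hgx, rfl⟩, hx⟩

theorem pcomp_mem_left {x : E} (h : x ∈ (g.pcomp f).domain) : x ∈ f.domain :=
  (mem_pcomp_iff.mp h).1

theorem pcomp_mem_right {x : E} (h : x ∈ (g.pcomp f).domain) (hx : x ∈ f.domain) :
    f ⟨x, hx⟩ ∈ g.domain := by
  obtain ⟨hx', h2⟩ := mem_pcomp_iff.mp h
  exact h2

theorem pcomp_apply (x : (g.pcomp f).domain) (hx : (x : E) ∈ f.domain)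
    (hgx : f ⟨x, hx⟩ ∈ g.domain) :
    g.pcomp f x = g ⟨f ⟨x, hx⟩, hgx⟩ := by
  have key : (f.domRestrict ((Submodule.comap f.toFun g.domain).map f.domain.subtype)) x
      = f ⟨x, hx⟩ := LinearPMap.domRestrict_apply rfl
  exact congrArg (fun y : g.domain => g y) (Subtype.ext key)

end Pcomp

variable {E F : Type*} [NormedAddCommGroup E] [InnerProductSpace ℂ E] [CompleteSpace E]
  [NormedAddCommGroup F] [InnerProductSpace ℂ F] [CompleteSpace F]

theorem adjoint_antitone {T S : E →ₗ.[ℂ] F} (hT : Dense (T.domain : Set E))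
    (hS : Dense (S.domain : Set E)) (h : T ≤ S) : S.adjoint ≤ T.adjoint := by
  have hfa : T.IsFormalAdjoint S.adjoint := by
    intro x y
    obtain ⟨x', hx', hfx'⟩ := LinearPMap.exists_of_le h x
    rw [hfx', hx']
    exact ((LinearPMap.adjoint_isFormalAdjoint hS).symm x' y)
  exact hfa.le_adjoint hT

theorem exists_decomp {H : Type*} [NormedAddCommGroup H] [InnerProductSpace ℂ H]
    [CompleteSpace H] (q : Submodule ℂ H) (hq : IsClosed (q : Set H)) (v : H) :
    ∃ w ∈ q, v - w ∈ qᗮ := by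
  haveI : CompleteSpace q := hq.completeSpace_coe
  exact Submodule.HasOrthogonalProjection.exists_orthogonal v

/-- The graph of `T` viewed inside the Hilbert space `WithLp 2 (E × F)`. -/
noncomputable def graph' (T : E →ₗ.[ℂ] F) : Submodule ℂ (WithLp 2 (E × F)) :=
  T.graph.comap (WithLp.linearEquiv 2 ℂ (E × F) : WithLp 2 (E × F) →ₗ[ℂ] E × F)

theorem mem_graph'_iff {T : E →ₗ.[ℂ] F} {z : WithLp 2 (E × F)} :
    z ∈ graph' T ↔ ∃ y : T.domain, (y : E) = z.fst ∧ T y = z.snd := by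
  rw [graph', Submodule.mem_comap]
  exact T.mem_graph_iff

theorem graph'_isClosed {T : E →ₗ.[ℂ] F} (hTc : T.IsClosed) :
    IsClosed ((graph' T : Submodule ℂ (WithLp 2 (E × F))) : Set (WithLp 2 (E × F))) := by
  have : ((graph' T : Submodule ℂ (WithLp 2 (E × F))) : Set (WithLp 2 (E × F)))
      = (WithLp.equiv 2 (E × F)) ⁻¹' (T.graph : Set (E × F)) := rfl
  rw [this]
  exact hTc.preimage (WithLp.prod_continuous_ofLp 2 E F)

theorem vonNeumann_exists {T : E →ₗ.[ℂ] F} (hT : Dense (T.domain : Set E))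
    (hTc : T.IsClosed) (f : E) :
    ∃ (u : T.domain) (h : T u ∈ T.adjoint.domain),
      (u : E) + T.adjoint ⟨T u, h⟩ = f := by
  set v : WithLp 2 (E × F) := (WithLp.equiv 2 (E × F)).symm (f, 0) with hv
  obtain ⟨k, hk, hw⟩ := exists_decomp (graph' T) (graph'_isClosed hTc) v
  obtain ⟨u, hu1, hu2⟩ := mem_graph'_iff.mp hk
  set w : WithLp 2 (E × F) := v - k with hwdef
  have hw1 : w.fst = f - (u : E) := by
    simp [hwdef, hv, hu1]
  have hw2 : w.snd = -(T u) := by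
    simp [hwdef, hv, hu2]
  have hC : ∀ x : T.domain, ⟪(x : E), w.fst⟫ + ⟪T x, w.snd⟫ = 0 := by
    intro x
    have hx : ((WithLp.equiv 2 (E × F)).symm ((x : E), T x)) ∈ graph' T := by
      rw [mem_graph'_iff]
      exact ⟨x, by simp, by simp⟩
    have h0 := (Submodule.mem_orthogonal _ w).mp hw _ hx
    simpa [WithLp.prod_inner_apply] using h0
  have hC' : ∀ x : T.domain, ⟪-w.fst, (x : E)⟫ = ⟪w.snd, T x⟫ := by
    intro x
    have h1 : ⟪(x : E), w.fst⟫ = -⟪T x, w.snd⟫ := by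
      have := hC x; linear_combination this
    calc ⟪-w.fst, (x : E)⟫ = -(starRingEnd ℂ) ⟪(x : E), w.fst⟫ := by
          rw [inner_neg_left, inner_conj_symm]
      _ = (starRingEnd ℂ) ⟪T x, w.snd⟫ := by rw [h1, _root_.map_neg, neg_neg]
      _ = ⟪w.snd, T x⟫ := inner_conj_symm _ _
  have hmem : w.snd ∈ T.adjoint.domain :=
    LinearPMap.mem_adjoint_domain_of_exists _ ⟨-w.fst, hC'⟩
  have hval : T.adjoint ⟨w.snd, hmem⟩ = -w.fst :=
    LinearPMap.adjoint_apply_eq hT _ hC'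
  have hTu : T u ∈ T.adjoint.domain := by
    have : T u = -w.snd := by rw [hw2, neg_neg]
    rw [this]
    exact neg_mem hmem
  refine ⟨u, hTu, ?_⟩
  have hsub : (⟨T u, hTu⟩ : T.adjoint.domain) = -⟨w.snd, hmem⟩ := by
    apply Subtype.ext
    simp [hw2]
  rw [hsub, LinearPMap.map_neg, hval, neg_neg, hw1]
  abel

theorem pcomp_self_surj {T : E →ₗ.[ℂ] F} (hT : Dense (T.domain : Set E))
    (hTc : T.IsClosed) (f : E) :
    ∃ x : (T.adjoint.pcomp T).domain, (x : E) + T.adjoint.pcomp T x = f := by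
  obtain ⟨u, h, hu⟩ := vonNeumann_exists hT hTc f
  have hxmem : (u : E) ∈ (T.adjoint.pcomp T).domain :=
    mem_pcomp_iff.mpr ⟨u.2, h⟩
  refine ⟨⟨u, hxmem⟩, ?_⟩
  rw [pcomp_apply _ u.2 h]
  exact hu

theorem pcomp_self_inner {T : E →ₗ.[ℂ] F} (hT : Dense (T.domain : Set E))
    (x : (T.adjoint.pcomp T).domain) (y : T.domain) :
    ⟪T.adjoint.pcomp T x, (y : E)⟫
      = ⟪T ⟨x, pcomp_mem_left x.2⟩, T y⟫ := by
  rw [pcomp_apply x (pcomp_mem_left x.2) (pcomp_mem_right x.2 _)]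
  exact LinearPMap.adjoint_isFormalAdjoint hT _ y

theorem pcomp_self_dense {T : E →ₗ.[ℂ] F} (hT : Dense (T.domain : Set E))
    (hTc : T.IsClosed) : Dense (((T.adjoint.pcomp T).domain : Submodule ℂ E) : Set E) := by
  rw [Submodule.dense_iff_topologicalClosure_eq_top, Submodule.topologicalClosure_eq_top_iff,
    Submodule.eq_bot_iff]
  intro fv hf
  obtain ⟨x, hx⟩ := pcomp_self_surj hT hTc fv
  have h0 : ⟪(x : E), fv⟫ = 0 := (Submodule.mem_orthogonal _ fv).mp hf _ x.2
  rw [← hx, inner_add_right] at h0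
  have h2 : ⟪(x : E), T.adjoint.pcomp T x⟫
      = ⟪T ⟨x, pcomp_mem_left x.2⟩, T ⟨x, pcomp_mem_left x.2⟩⟫ := by
    rw [← inner_conj_symm, pcomp_self_inner hT x ⟨x, pcomp_mem_left x.2⟩, inner_conj_symm]
  rw [h2] at h0
  have hx0 : (x : E) = 0 := by
    set a := (x : E)
    set b := T ⟨x, pcomp_mem_left x.2⟩
    have hre := congrArg RCLike.re h0
    rw [_root_.map_add] at hre
    have ha : 0 ≤ RCLike.re ⟪a, a⟫ := inner_self_nonneg
    have hb : 0 ≤ RCLike.re ⟪b, b⟫ := inner_self_nonneg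
    have hz : RCLike.re (0 : ℂ) = 0 := by simp
    rw [hz] at hre
    have ha0 : RCLike.re ⟪a, a⟫ = 0 := by linarith
    have : ⟪a, a⟫ = 0 := by
      rw [← inner_self_ofReal_re a, ha0]
      norm_num
    exact inner_self_eq_zero.mp this
  have hxz : x = 0 := Subtype.ext hx0
  rw [← hx, hxz]
  simp
theorem pcomp_self_isSelfAdjoint {T : E →ₗ.[ℂ] F} (hT : Dense (T.domain : Set E))
    (hTc : T.IsClosed) : IsSelfAdjoint (T.adjoint.pcomp T) := by
  set A := T.adjoint.pcomp T with hA
  have hAd : Dense ((A.domain : Submodule ℂ E) : Set E) := pcomp_self_dense hT hTc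
  have hsymm : A.IsFormalAdjoint A := by
    intro x y
    rw [pcomp_self_inner hT x ⟨y, pcomp_mem_left y.2⟩, ← inner_conj_symm ((x : E)),
      pcomp_self_inner hT y ⟨x, pcomp_mem_left x.2⟩, inner_conj_symm]
  have hle : A ≤ A.adjoint := hsymm.le_adjoint hAd
  have key : ∀ v : A.adjoint.domain, ∃ u : A.domain, (u : E) = v ∧ A u = A.adjoint v := by
    intro v
    obtain ⟨u, hu⟩ := pcomp_self_surj hT hTc ((v : E) + A.adjoint v)
    set u' : A.adjoint.domain := ⟨u, hle.1 u.2⟩ with hu'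
    have hAu' : A.adjoint u' = A u := (hle.2 (x := u) (y := u') rfl).symm
    have heq : ((v - u' : A.adjoint.domain) : E) + A.adjoint (v - u') = 0 := by
      rw [LinearPMap.map_sub, hAu']
      push_cast
      have h2 : ((v : E) - u) + ((A.adjoint v : E) - A u)
          = ((v : E) + A.adjoint v) - ((u : E) + A u) := by abel
      rw [h2, ← hu, sub_self]
    have hforall : ∀ f : E, ⟪((v - u' : A.adjoint.domain) : E), f⟫ = 0 := by
      intro f
      obtain ⟨z, hz⟩ := pcomp_self_surj hT hTc f
      set y := v - u' with hy
      calc ⟪(y : E), f⟫ = ⟪(y : E), (z : E)⟫ + ⟪(y : E), A z⟫ := by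
            rw [← hz, inner_add_right]
        _ = ⟪(y : E), (z : E)⟫ + ⟪A.adjoint y, (z : E)⟫ := by
            rw [LinearPMap.adjoint_isFormalAdjoint hAd y z]
        _ = ⟪(y : E) + A.adjoint y, (z : E)⟫ := (inner_add_left _ _ _).symm
        _ = 0 := by rw [heq, inner_zero_left]
    have hy0 : ((v - u' : A.adjoint.domain) : E) = 0 :=
      inner_self_eq_zero.mp (hforall _)
    have hvu : v = u' := by
      have : v - u' = 0 := Subtype.ext hy0
      rwa [sub_eq_zero] at this
    exact ⟨u, by rw [hvu], by rw [hvu, hAu']⟩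
  have hge : A.adjoint ≤ A := by
    refine ⟨fun v hv => ?_, fun x y hxy => ?_⟩
    · obtain ⟨u, hu1, _⟩ := key ⟨v, hv⟩
      have h3 := u.2
      rwa [hu1] at h3
    · obtain ⟨u, hu1, hu2⟩ := key x
      exact hu2.symm.trans
        (congrArg (fun t : A.domain => A t) (Subtype.ext (hu1.trans hxy)))
  exact LinearPMap.isSelfAdjoint_def.mpr (le_antisymm hge hle)

theorem eq_of_le_selfAdjoint {A B : E →ₗ.[ℂ] E} (hA : IsSelfAdjoint A)
    (hB : IsSelfAdjoint B) (h : A ≤ B) : A = B := by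
  have hAd : Dense ((A.domain : Submodule ℂ E) : Set E) := hA.dense_domain
  have hBd : Dense ((B.domain : Submodule ℂ E) : Set E) := hB.dense_domain
  have h2 : B.adjoint ≤ A.adjoint := adjoint_antitone hAd hBd h
  rw [LinearPMap.isSelfAdjoint_def.mp hA, LinearPMap.isSelfAdjoint_def.mp hB] at h2
  exact le_antisymm h h2
theorem pcompTT_le_G {T S : E →ₗ.[ℂ] F} (hTS : T ≤ S) :
    T.adjoint.pcomp T ≤ T.adjoint.pcomp S := by
  refine ⟨fun x hx => ?_, fun x y hxy => ?_⟩
  · obtain ⟨hx1, hx2⟩ := mem_pcomp_iff.mp hx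
    refine mem_pcomp_iff.mpr ⟨hTS.1 hx1, ?_⟩
    have h3 : S ⟨x, hTS.1 hx1⟩ = T ⟨x, hx1⟩ := (hTS.2 rfl).symm
    rw [h3]; exact hx2
  · have hx1 : (x : E) ∈ T.domain := pcomp_mem_left x.2
    have hy1 : (y : E) ∈ S.domain := pcomp_mem_left y.2
    rw [pcomp_apply x hx1 (pcomp_mem_right x.2 _),
      pcomp_apply y hy1 (pcomp_mem_right y.2 _)]
    refine congrArg (fun t : T.adjoint.domain => T.adjoint t) (Subtype.ext ?_)
    exact hTS.2 hxy

theorem pcompSS_le_G {T S : E →ₗ.[ℂ] F} (hT : Dense (T.domain : Set E))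
    (hS : Dense (S.domain : Set E)) (hTS : T ≤ S) :
    S.adjoint.pcomp S ≤ T.adjoint.pcomp S := by
  have hadj : S.adjoint ≤ T.adjoint := adjoint_antitone hT hS hTS
  refine ⟨fun x hx => ?_, fun x y hxy => ?_⟩
  · obtain ⟨hx1, hx2⟩ := mem_pcomp_iff.mp hx
    exact mem_pcomp_iff.mpr ⟨hx1, hadj.1 hx2⟩
  · have hx1 : (x : E) ∈ S.domain := pcomp_mem_left x.2
    have hy1 : (y : E) ∈ S.domain := pcomp_mem_left y.2
    rw [pcomp_apply x hx1 (pcomp_mem_right x.2 _),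
      pcomp_apply y hy1 (pcomp_mem_right y.2 _)]
    exact hadj.2 (congrArg (fun t : S.domain => S t) (Subtype.ext hxy))

theorem S_le_T_of_pcomp_eq {T S : E →ₗ.[ℂ] F} (hTc : T.IsClosed) (hSc : S.IsClosed)
    (hS : Dense (S.domain : Set E)) (hTS : T ≤ S)
    (hA : T.adjoint.pcomp T = S.adjoint.pcomp S) : S ≤ T := by
  set A := S.adjoint.pcomp S with hAdef
  set M' : Submodule ℂ (WithLp 2 (E × F)) := graph' (S.domRestrict A.domain) with hM'
  have hM'S : M' ≤ graph' S :=
    Submodule.comap_mono (LinearPMap.le_graph_of_le LinearPMap.domRestrict_le)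
  have hM'T : M' ≤ graph' T := by
    intro m hm
    obtain ⟨y, hy1, hy2⟩ := mem_graph'_iff.mp hm
    have hyA : (y : E) ∈ A.domain := y.2.1
    have hyS : (y : E) ∈ S.domain := y.2.2
    have hyA' : (y : E) ∈ (T.adjoint.pcomp T).domain := by rw [hA]; exact hyA
    have hyT : (y : E) ∈ T.domain := pcomp_mem_left hyA'
    have hval : S.domRestrict A.domain y = T ⟨(y : E), hyT⟩ := by
      have hdr : S.domRestrict A.domain y = S ⟨(y : E), hyS⟩ :=
        LinearPMap.domRestrict_apply (x := y) rfl
      rw [hdr]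
      exact (hTS.2 rfl).symm
    rw [mem_graph'_iff]
    exact ⟨⟨(y : E), hyT⟩, hy1, by rw [← hval, hy2]⟩
  apply LinearPMap.le_of_le_graph
  intro a ha
  obtain ⟨a1, a2⟩ := a
  obtain ⟨v, hv1, hv2⟩ := S.mem_graph_iff.mp ha
  set ξ : WithLp 2 (E × F) := (WithLp.equiv 2 (E × F)).symm ((v : E), S v) with hξ
  have hξS : ξ ∈ graph' S := by
    rw [mem_graph'_iff]
    exact ⟨v, by simp [hξ], by simp [hξ]⟩
  set N := M'.topologicalClosure with hN
  obtain ⟨n, hn, hwN⟩ := exists_decomp N M'.isClosed_topologicalClosure ξ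
  set w : WithLp 2 (E × F) := ξ - n with hw
  have hwM' : w ∈ M'ᗮ := Submodule.orthogonal_le M'.le_topologicalClosure hwN
  have hnS : n ∈ graph' S :=
    M'.topologicalClosure_minimal hM'S (graph'_isClosed hSc) hn
  have hwS : w ∈ graph' S := sub_mem hξS hnS
  obtain ⟨z, hz1, hz2⟩ := mem_graph'_iff.mp hwS
  have hz0 : (z : E) = 0 := by
    have hforall : ∀ f : E, ⟪f, (z : E)⟫ = 0 := by
      intro f
      obtain ⟨u, hu⟩ := pcomp_self_surj hS hSc f
      have huS : (u : E) ∈ S.domain := pcomp_mem_left u.2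
      set m : WithLp 2 (E × F) := (WithLp.equiv 2 (E × F)).symm ((u : E), S ⟨u, huS⟩)
        with hm
      have hmM' : m ∈ M' := by
        rw [mem_graph'_iff]
        have hdr : S.domRestrict A.domain ⟨(u : E), ⟨u.2, huS⟩⟩ = S ⟨(u : E), huS⟩ :=
          LinearPMap.domRestrict_apply (x := ⟨(u : E), ⟨u.2, huS⟩⟩) rfl
        refine ⟨⟨(u : E), ⟨u.2, huS⟩⟩, by simp [hm], ?_⟩
        rw [hdr]
        simp [hm]
      have horth := (Submodule.mem_orthogonal _ w).mp hwM' _ hmM'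
      rw [WithLp.prod_inner_apply] at horth
      simp only [WithLp.ofLp_fst, WithLp.ofLp_snd] at horth
      have hm1 : m.fst = (u : E) := by simp [hm]
      have hm2 : m.snd = S ⟨u, huS⟩ := by simp [hm]
      rw [hm1, hm2, ← hz1, ← hz2] at horth
      have hadj : ⟪S ⟨u, huS⟩, S z⟫ = ⟪(S.adjoint.pcomp S) u, (z : E)⟫ := by
        rw [pcomp_apply u huS (pcomp_mem_right u.2 _)]
        exact (LinearPMap.adjoint_isFormalAdjoint hS
          ⟨S ⟨(u : E), huS⟩, pcomp_mem_right u.2 huS⟩ z).symm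
      rw [hadj, ← inner_add_left, hu] at horth
      exact horth
    exact inner_self_eq_zero.mp (hforall _)
  have hzz : z = 0 := Subtype.ext hz0
  have hw0 : w = 0 := by
    have h1 : w.fst = 0 := by rw [← hz1, hz0]
    have h2 : w.snd = 0 := by rw [← hz2, hzz, LinearPMap.map_zero]
    exact (WithLp.ext_iff (p := 2)).mpr (Prod.ext h1 h2)
  have hξn : ξ = n := by
    have : ξ - n = 0 := hw0
    rwa [sub_eq_zero] at this
  have hξT : ξ ∈ graph' T := by
    rw [hξn]
    exact M'.topologicalClosure_minimal hM'T (graph'_isClosed hTc) hn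
  obtain ⟨y, hy1, hy2⟩ := mem_graph'_iff.mp hξT
  have hξ1 : ξ.fst = (v : E) := by simp [hξ]
  have hξ2 : ξ.snd = S v := by simp [hξ]
  rw [hξ1] at hy1
  rw [hξ2] at hy2
  exact T.mem_graph_iff.mpr ⟨y, hy1.trans hv1, hy2.trans hv2⟩

end GaffneyAux

/-- Let `T` and `S` be closed densely defined unbounded operators from `H₁` to `H₂` with
`T ⊆ S`.  If the Gaffney-type operator `T*S` (with its natural domain
`{u ∈ D(S) : Su ∈ D(T*)}`) is self-adjoint, then `T*T = T*S = S*S`; consequently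
`D(T) = D(S)` and `T = S`. -/
theorem selfAdjoint_gaffney_implies_eq {H₁ H₂ : Type*}
    [NormedAddCommGroup H₁] [InnerProductSpace ℂ H₁] [CompleteSpace H₁]
    [NormedAddCommGroup H₂] [InnerProductSpace ℂ H₂] [CompleteSpace H₂]
    (T S : H₁ →ₗ.[ℂ] H₂)
    (hTclosed : T.IsClosed) (hSclosed : S.IsClosed)
    (hTdense : Dense (T.domain : Set H₁)) (hSdense : Dense (S.domain : Set H₁))
    (hTS : T ≤ S)
    (hG : IsSelfAdjoint (T.adjoint.pcomp S)) :
    T.adjoint.pcomp T = T.adjoint.pcomp S ∧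
      T.adjoint.pcomp S = S.adjoint.pcomp S ∧
      T.domain = S.domain ∧ T = S := by
  have hTT : IsSelfAdjoint (T.adjoint.pcomp T) :=
    GaffneyAux.pcomp_self_isSelfAdjoint hTdense hTclosed
  have hSS : IsSelfAdjoint (S.adjoint.pcomp S) :=
    GaffneyAux.pcomp_self_isSelfAdjoint hSdense hSclosed
  have e1 : T.adjoint.pcomp T = T.adjoint.pcomp S :=
    GaffneyAux.eq_of_le_selfAdjoint hTT hG (GaffneyAux.pcompTT_le_G hTS)
  have e2 : S.adjoint.pcomp S = T.adjoint.pcomp S :=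
    GaffneyAux.eq_of_le_selfAdjoint hSS hG (GaffneyAux.pcompSS_le_G hTdense hSdense hTS)
  have hA : T.adjoint.pcomp T = S.adjoint.pcomp S := e1.trans e2.symm
  have hST : S ≤ T := GaffneyAux.S_le_T_of_pcomp_eq hTclosed hSclosed hSdense hTS hA
  have hTSeq : T = S := le_antisymm hTS hST
  exact ⟨e1, e2.symm, congrArg LinearPMap.domain hTSeq, hTSeq⟩
end

section
/- Let T and S be closed densely defined unbounded operators from H₁ to H₂ with T ⊆ S. Then the following are equivalent: (i) D(T) = D(S) (equivalently, T = S); (ii) T*T = S*S; (iii) the operator T*S (with domain {u ∈ D(S) : Su ∈ D(T*)}) is self-adjoint. -/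
set_option maxHeartbeats 1000000


namespace LinearPMap

section pcomp

variable {R E F G : Type*} [CommRing R]
    [AddCommGroup E] [Module R E] [AddCommGroup F] [Module R F]
    [AddCommGroup G] [Module R G] (g : F →ₗ.[R] G) (f : E →ₗ.[R] F)

theorem mem_pcomp_domain {x : E} :
    x ∈ (g.pcomp f).domain ↔ ∃ hx : x ∈ f.domain, f ⟨x, hx⟩ ∈ g.domain := by
  constructor
  · rintro ⟨⟨y, hy, hyx⟩, hxf⟩
    refine ⟨hxf, ?_⟩
    have : (⟨x, hxf⟩ : f.domain) = y := Subtype.ext hyx.symm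
    rw [this]; exact hy
  · rintro ⟨hx, hfx⟩
    exact ⟨⟨⟨x, hx⟩, hfx, rfl⟩, hx⟩

theorem pcomp_apply (x : (g.pcomp f).domain) (hx : (x : E) ∈ f.domain)
    (hfx : f ⟨x, hx⟩ ∈ g.domain) :
    (g.pcomp f) x = g ⟨f ⟨x, hx⟩, hfx⟩ := by
  set D := (Submodule.comap f.toFun g.domain).map f.domain.subtype
  have h1 : (g.pcomp f) x = g ⟨f.domRestrict D x, _⟩ := rfl
  rw [h1]
  have h2 : f.domRestrict D x = f ⟨x, hx⟩ := domRestrict_apply rfl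
  congr 1

theorem pcomp_le_pcomp {g g' : F →ₗ.[R] G} {f f' : E →ₗ.[R] F}
    (hg : g ≤ g') (hf : f ≤ f') : g.pcomp f ≤ g'.pcomp f' := by
  constructor
  · intro x hx
    obtain ⟨hxf, hfx⟩ := (mem_pcomp_domain g f).mp hx
    have hxf' : x ∈ f'.domain := hf.1 hxf
    refine (mem_pcomp_domain g' f').mpr ⟨hxf', ?_⟩
    have hvals : f ⟨x, hxf⟩ = f' ⟨x, hxf'⟩ := hf.2 rfl
    rw [← hvals]
    exact hg.1 hfx
  · intro x y hxy
    obtain ⟨hxf, hfx⟩ := (mem_pcomp_domain g f).mp x.2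
    obtain ⟨hyf', hfy⟩ := (mem_pcomp_domain g' f').mp y.2
    rw [pcomp_apply g f x hxf hfx, pcomp_apply g' f' y hyf' hfy]
    refine hg.2 ?_
    exact hf.2 hxy


end pcomp

section hilbert

variable {E F : Type*} [NormedAddCommGroup E] [InnerProductSpace ℂ E] [CompleteSpace E]
  [NormedAddCommGroup F] [InnerProductSpace ℂ F] [CompleteSpace F]

local notation "⟪" x ", " y "⟫" => @inner ℂ _ _ x y

/-- Von Neumann: `1 + A†A` is surjective for a closed densely defined `A`. -/
theorem vonNeumann_surj (A : E →ₗ.[ℂ] F) (hA : A.IsClosed)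
    (hAd : Dense (A.domain : Set E)) (u : E) :
    ∃ x : (A.adjoint.pcomp A).domain, (x : E) + (A.adjoint.pcomp A) x = u := by
  classical
  set W := WithLp 2 (E × F) with hW
  let e : W ≃L[ℂ] E × F := WithLp.prodContinuousLinearEquiv 2 ℂ E F
  let G : Submodule ℂ W := A.graph.comap ((WithLp.linearEquiv 2 ℂ (E × F) : W ≃ₗ[ℂ] E × F) : W →ₗ[ℂ] E × F)
  have hGclosed : _root_.IsClosed (G : Set W) := _root_.IsClosed.preimage e.continuous hA
  haveI : CompleteSpace G := hGclosed.completeSpace_coe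
  let φ : G →L[ℂ] ℂ := (innerSL ℂ u).comp
    (((ContinuousLinearMap.fst ℂ E F).comp e.toContinuousLinearMap).comp G.subtypeL)
  set y : G := (InnerProductSpace.toDual ℂ G).symm φ with hy
  have key : ∀ g : G, ⟪y, g⟫ = ⟪u, (e (g : W)).1⟫ := fun g => by
    rw [hy, InnerProductSpace.toDual_symm_apply]; rfl
  have hzg : e (y : W) ∈ A.graph := y.2
  rw [mem_graph_iff] at hzg
  obtain ⟨x₁, hx₁⟩ := hzg
  -- so (e y) = (x₁, A x₁)
  have hstar : ∀ w : A.domain, ⟪(x₁ : E), (w : E)⟫ + ⟪A x₁, A w⟫ = ⟪u, (w : E)⟫ := by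
    intro w
    have hgw : e.symm (↑w, A w) ∈ G := by
      show e.toLinearEquiv (e.symm (↑w, A w)) ∈ A.graph
      simp only [ContinuousLinearEquiv.coe_toLinearEquiv]
      rw [ContinuousLinearEquiv.apply_symm_apply]
      exact mem_graph A w
    have := key ⟨_, hgw⟩
    rw [ContinuousLinearEquiv.apply_symm_apply] at this
    rw [← this]
    have hcoe : ⟪y, (⟨_, hgw⟩ : G)⟫ = ⟪(y : W), e.symm (↑w, A w)⟫ := rfl
    rw [hcoe]
    rw [WithLp.prod_inner_apply]
    have h1 : (y : W).ofLp.1 = (x₁ : E) := hx₁.1.symm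
    have h2 : (y : W).ofLp.2 = A x₁ := hx₁.2.symm
    have h3 : (e.symm (↑w, A w) : W).ofLp.1 = (w : E) := rfl
    have h4 : (e.symm (↑w, A w) : W).ofLp.2 = A w := rfl
    rw [h1, h2, h3, h4]
  have hmem : A x₁ ∈ A.adjoint.domain := by
    apply mem_adjoint_domain_of_exists
    exact ⟨u - (x₁ : E), fun w => by
      rw [inner_sub_left, ← hstar w]; ring⟩
  have happly : A.adjoint ⟨A x₁, hmem⟩ = u - (x₁ : E) :=
    adjoint_apply_eq hAd _ (fun w => by rw [inner_sub_left, ← hstar w]; ring)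
  have hdom : (x₁ : E) ∈ (A.adjoint.pcomp A).domain :=
    (mem_pcomp_domain _ _).mpr ⟨x₁.2, by
      have : (⟨(x₁ : E), x₁.2⟩ : A.domain) = x₁ := Subtype.ext rfl
      rw [this]; exact hmem⟩
  refine ⟨⟨x₁, hdom⟩, ?_⟩
  have hval : (A.adjoint.pcomp A) ⟨(x₁ : E), hdom⟩ = u - (x₁ : E) := by
    rw [pcomp_apply _ _ _ x₁.2]
    rw [← happly]
  rw [hval]
  abel

end hilbert

section hilbert2

variable {E F : Type*} [NormedAddCommGroup E] [InnerProductSpace ℂ E] [CompleteSpace E]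
  [NormedAddCommGroup F] [InnerProductSpace ℂ F] [CompleteSpace F]

local notation "⟪" x ", " y "⟫" => @inner ℂ _ _ x y

theorem vonNeumann_dense (A : E →ₗ.[ℂ] F) (hA : A.IsClosed)
    (hAd : Dense (A.domain : Set E)) :
    Dense (((A.adjoint.pcomp A).domain : Submodule ℂ E) : Set E) := by
  set B := A.adjoint.pcomp A with hB
  rw [Submodule.dense_iff_topologicalClosure_eq_top, Submodule.topologicalClosure_eq_top_iff]
  rw [Submodule.eq_bot_iff]
  intro u hu
  obtain ⟨x, hx⟩ := vonNeumann_surj A hA hAd u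
  have hxA : (x : E) ∈ A.domain := ((mem_pcomp_domain _ _).mp x.2).1
  have hAxmem : A ⟨x, hxA⟩ ∈ A.adjoint.domain := ((mem_pcomp_domain _ _).mp x.2).2
  have hBx : B x = A.adjoint ⟨A ⟨x, hxA⟩, hAxmem⟩ := pcomp_apply _ _ x hxA hAxmem
  have hfa := adjoint_isFormalAdjoint hAd
  have h0 : ⟪(x : E), u⟫ = 0 := (Submodule.mem_orthogonal _ _).mp hu _ x.2
  have h1 : ⟪u, (x : E)⟫ = 0 := by rw [← inner_conj_symm, h0]; simp
  have h2 : (0 : ℂ) = ⟪(x : E), (x : E)⟫ + ⟪A ⟨x, hxA⟩, A ⟨x, hxA⟩⟫ := by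
    have : ⟪A.adjoint ⟨A ⟨x, hxA⟩, hAxmem⟩, (x : E)⟫ = ⟪A ⟨x, hxA⟩, A ⟨x, hxA⟩⟫ :=
      hfa ⟨A ⟨x, hxA⟩, hAxmem⟩ ⟨x, hxA⟩
    calc (0 : ℂ) = ⟪(x : E) + B x, (x : E)⟫ := by
          rw [hx]; exact h1.symm
      _ = ⟪(x : E), (x : E)⟫ + ⟪A ⟨x, hxA⟩, A ⟨x, hxA⟩⟫ := by
          rw [inner_add_left, hBx, this]
  have hxz : (x : E) = 0 := by
    have e1 := inner_self_eq_norm_sq (𝕜 := ℂ) ((x : E))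
    have e2 := inner_self_eq_norm_sq (𝕜 := ℂ) (A ⟨x, hxA⟩)
    have e4 := congrArg Complex.re h2.symm
    rw [Complex.add_re, Complex.zero_re] at e4
    rw [RCLike.re_to_complex] at e1 e2
    rw [e1, e2] at e4
    have h4 : ‖(x : E)‖ = 0 := by
      nlinarith [norm_nonneg (x : E), norm_nonneg (A ⟨x, hxA⟩)]
    exact norm_eq_zero.mp h4
  have hx0 : x = 0 := Subtype.ext hxz
  rw [← hx, hx0]
  simp

theorem vonNeumann_selfAdjoint (A : E →ₗ.[ℂ] F) (hA : A.IsClosed)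
    (hAd : Dense (A.domain : Set E)) :
    IsSelfAdjoint (A.adjoint.pcomp A) := by
  set B := A.adjoint.pcomp A with hBdef
  have hfa := adjoint_isFormalAdjoint hAd
  have hBd : Dense ((B.domain : Submodule ℂ E) : Set E) := vonNeumann_dense A hA hAd
  -- symmetry
  have happ : ∀ x : B.domain, ∃ (hx : (x : E) ∈ A.domain) (hAx : A ⟨x, hx⟩ ∈ A.adjoint.domain),
      B x = A.adjoint ⟨A ⟨x, hx⟩, hAx⟩ := fun x => by
    have hx : (x : E) ∈ A.domain := ((mem_pcomp_domain _ _).mp x.2).1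
    have hAx : A ⟨x, hx⟩ ∈ A.adjoint.domain := ((mem_pcomp_domain _ _).mp x.2).2
    exact ⟨hx, hAx, pcomp_apply _ _ x hx hAx⟩
  have hsymm : B.IsFormalAdjoint B := by
    intro x y
    obtain ⟨hx, hAx, hbx⟩ := happ x
    obtain ⟨hy, hAy, hby⟩ := happ y
    rw [hbx, hby]
    have h1 : ⟪A.adjoint ⟨A ⟨x, hx⟩, hAx⟩, (y : E)⟫ = ⟪A ⟨x, hx⟩, A ⟨y, hy⟩⟫ :=
      hfa ⟨A ⟨x, hx⟩, hAx⟩ ⟨y, hy⟩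
    have h2 : ⟪A.adjoint ⟨A ⟨y, hy⟩, hAy⟩, (x : E)⟫ = ⟪A ⟨y, hy⟩, A ⟨x, hx⟩⟫ :=
      hfa ⟨A ⟨y, hy⟩, hAy⟩ ⟨x, hx⟩
    rw [h1, ← inner_conj_symm ((x : E)), h2, inner_conj_symm]
  have hle : B ≤ B.adjoint := IsFormalAdjoint.le_adjoint hBd hsymm
  have hfaB := adjoint_isFormalAdjoint hBd
  -- reverse inclusion
  have main : ∀ v : B.adjoint.domain, ∃ hv : (v : E) ∈ B.domain, B.adjoint v = B ⟨v, hv⟩ := by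
    intro v
    obtain ⟨x, hx⟩ := vonNeumann_surj A hA hAd ((v : E) + B.adjoint v)
    have hkey : ∀ u : B.domain, ⟪(u : E) + B u, (v : E) - (x : E)⟫ = 0 := by
      intro u
      have e1 : ⟪B u, (v : E)⟫ = ⟪(u : E), B.adjoint v⟫ := by
        calc ⟪B u, (v : E)⟫ = (starRingEnd ℂ) ⟪(v : E), B u⟫ := (inner_conj_symm _ _).symm
          _ = (starRingEnd ℂ) ⟪B.adjoint v, (u : E)⟫ := by rw [hfaB v u]
          _ = ⟪(u : E), B.adjoint v⟫ := inner_conj_symm _ _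
      have e2 : ⟪(u : E), B x⟫ = ⟪B u, (x : E)⟫ := by
        calc ⟪(u : E), B x⟫ = (starRingEnd ℂ) ⟪B x, (u : E)⟫ := (inner_conj_symm _ _).symm
          _ = (starRingEnd ℂ) ⟪(x : E), B u⟫ := by rw [hsymm x u]
          _ = ⟪B u, (x : E)⟫ := inner_conj_symm _ _
      rw [inner_sub_right, inner_add_left, inner_add_left]
      have e3 : ⟪(u : E), (v : E)⟫ + ⟪(u : E), B.adjoint v⟫ = ⟪(u : E), (x : E)⟫ + ⟪B u, (x : E)⟫ := by
        rw [← e2, ← inner_add_right, ← inner_add_right, hx]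
      rw [e1]
      linear_combination e3
    obtain ⟨w, hw⟩ := vonNeumann_surj A hA hAd ((v : E) - (x : E))
    have := hkey w
    rw [hw, inner_self_eq_zero, sub_eq_zero] at this
    refine ⟨this ▸ x.2, ?_⟩
    have hxv : x = ⟨(v : E), this ▸ x.2⟩ := Subtype.ext this.symm
    have : B.adjoint v = ((x : E) + B x) - (v : E) := by rw [hx]; abel
    rw [this, ← hxv]
    have h4 : (x : E) = (v : E) := ‹(v : E) = (x : E)›.symm
    rw [h4]; abel
  have hge : B.adjoint ≤ B := by
    refine ⟨fun v hv => ?_, fun p q hpq => ?_⟩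
    · obtain ⟨hv, -⟩ := main ⟨v, hv⟩
      exact hv
    · obtain ⟨hp, he⟩ := main p
      rw [he]
      have : (⟨(p : E), hp⟩ : B.domain) = q := Subtype.ext hpq
      rw [this]
  exact isSelfAdjoint_def.mpr (le_antisymm hge hle)

theorem graph_le_closure_pcomp (A : E →ₗ.[ℂ] F) (hA : A.IsClosed)
    (hAd : Dense (A.domain : Set E)) :
    (A.graph : Set (E × F)) ⊆
      _root_.closure (((A.domRestrict (A.adjoint.pcomp A).domain).graph : Submodule ℂ (E × F)) :
        Set (E × F)) := by
  intro p hp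
  set B := A.adjoint.pcomp A with hBdef
  set G0 : Submodule ℂ (E × F) := (A.domRestrict B.domain).graph with hG0
  set W := WithLp 2 (E × F) with hW
  let e : W ≃L[ℂ] E × F := WithLp.prodContinuousLinearEquiv 2 ℂ E F
  let L : W →ₗ[ℂ] E × F := ((WithLp.linearEquiv 2 ℂ (E × F) : W ≃ₗ[ℂ] E × F) : W →ₗ[ℂ] E × F)
  let G0' : Submodule ℂ W := G0.comap L
  let G' : Submodule ℂ W := A.graph.comap L
  have hG'closed : _root_.IsClosed (G' : Set W) := _root_.IsClosed.preimage e.continuous hA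
  set P : Submodule ℂ W := G0'.topologicalClosure with hPdef
  haveI : CompleteSpace P := (Submodule.isClosed_topologicalClosure _).completeSpace_coe
  set p' : W := e.symm p with hp'def
  have hp' : p' ∈ G' := by
    show L p' ∈ A.graph
    have h1 : L p' = e p' := rfl
    rw [h1, hp'def, ContinuousLinearEquiv.apply_symm_apply]
    exact hp
  set q : W := p' - ↑(P.orthogonalProjectionOnto p') with hqdef
  have hqP : q ∈ Pᗮ := Submodule.sub_starProjection_mem_orthogonal p'
  have hPG' : P ≤ G' :=
    G0'.topologicalClosure_minimal
      (Submodule.comap_mono (le_graph_of_le domRestrict_le)) hG'closed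
  have hqG' : q ∈ G' := G'.sub_mem hp' (hPG' (P.orthogonalProjectionOnto p').2)
  have hqG'' : L q ∈ A.graph := hqG'
  rw [mem_graph_iff] at hqG''
  obtain ⟨w, hw1, hw2⟩ := hqG''
  have hfa := adjoint_isFormalAdjoint hAd
  have hperp : ∀ x : B.domain, ⟪(x : E) + B x, (w : E)⟫ = 0 := by
    intro x
    have hx : (x : E) ∈ A.domain := ((mem_pcomp_domain _ _).mp x.2).1
    have hAx : A ⟨x, hx⟩ ∈ A.adjoint.domain := ((mem_pcomp_domain _ _).mp x.2).2
    have hBx : B x = A.adjoint ⟨A ⟨x, hx⟩, hAx⟩ := pcomp_apply _ _ x hx hAx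
    have hy : (x : E) ∈ B.domain ⊓ A.domain := ⟨x.2, hx⟩
    have hr0 : ((x : E), A ⟨x, hx⟩) ∈ G0 := by
      have hmg := mem_graph (A.domRestrict B.domain) ⟨(x : E), hy⟩
      have hdr : (A.domRestrict B.domain) ⟨(x : E), hy⟩ = A ⟨x, hx⟩ :=
        domRestrict_apply rfl
      rw [hdr] at hmg
      exact hmg
    have hrG0' : e.symm ((x : E), A ⟨x, hx⟩) ∈ G0' := by
      show L (e.symm ((x : E), A ⟨x, hx⟩)) ∈ G0
      have h1 : L (e.symm ((x : E), A ⟨x, hx⟩)) = e (e.symm ((x : E), A ⟨x, hx⟩)) := rfl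
      rw [h1, ContinuousLinearEquiv.apply_symm_apply]
      exact hr0
    have hrP : e.symm ((x : E), A ⟨x, hx⟩) ∈ P := Submodule.le_topologicalClosure _ hrG0'
    have h0 : ⟪e.symm ((x : E), A ⟨x, hx⟩), q⟫ = 0 :=
      (Submodule.mem_orthogonal _ _).mp hqP _ hrP
    rw [WithLp.prod_inner_apply] at h0
    have hfst : (e.symm ((x : E), A ⟨x, hx⟩) : W).ofLp.1 = (x : E) := rfl
    have hsnd : (e.symm ((x : E), A ⟨x, hx⟩) : W).ofLp.2 = A ⟨x, hx⟩ := rfl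
    have hqfst : (q : W).ofLp.1 = (w : E) := hw1.symm
    have hqsnd : (q : W).ofLp.2 = A w := hw2.symm
    rw [hfst, hsnd, hqfst, hqsnd] at h0
    have hAA : ⟪A ⟨x, hx⟩, A w⟫ = ⟪A.adjoint ⟨A ⟨x, hx⟩, hAx⟩, (w : E)⟫ :=
      (hfa ⟨A ⟨x, hx⟩, hAx⟩ w).symm
    rw [inner_add_left, hBx, ← hAA]
    exact h0
  obtain ⟨x₀, hx₀⟩ := vonNeumann_surj A hA hAd (w : E)
  have hw0 : (w : E) = 0 := by
    have := hperp x₀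
    rw [hx₀, inner_self_eq_zero] at this
    exact this
  have hAw : A w = 0 := by
    have hwz : w = 0 := Subtype.ext hw0
    rw [hwz]
    exact LinearPMap.map_zero A
  have hq0 : q = 0 := by
    have hLq : L q = 0 := by
      have h1 : L q = ((L q).1, (L q).2) := rfl
      rw [h1, ← hw1, ← hw2, hw0, hAw]
      rfl
    exact (WithLp.linearEquiv 2 ℂ (E × F)).map_eq_zero_iff.mp hLq
  have hpP : p' ∈ P := by
    have : p' = ↑(P.orthogonalProjectionOnto p') := by
      have := sub_eq_zero.mp hq0
      exact this
    rw [this]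
    exact (P.orthogonalProjectionOnto p').2
  have hclset : p' ∈ _root_.closure (G0' : Set W) := by
    rw [← Submodule.topologicalClosure_coe]
    exact hpP
  have hpre : _root_.closure (G0' : Set W) = ⇑e ⁻¹' _root_.closure (G0 : Set (E × F)) := by
    have hGs : (G0' : Set W) = ⇑e ⁻¹' (G0 : Set (E × F)) := rfl
    rw [hGs]
    exact (e.toHomeomorph.preimage_closure _).symm
  rw [hpre] at hclset
  have : e p' ∈ _root_.closure (G0 : Set (E × F)) := hclset
  rwa [hp'def, ContinuousLinearEquiv.apply_symm_apply] at this

theorem adjoint_antitone {T S : E →ₗ.[ℂ] F} (hTd : Dense (T.domain : Set E))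
    (hSd : Dense (S.domain : Set E)) (h : T ≤ S) : S.adjoint ≤ T.adjoint := by
  apply IsFormalAdjoint.le_adjoint hTd
  intro x y
  obtain ⟨x', hx', hTx⟩ := exists_of_le h x
  have hfa := adjoint_isFormalAdjoint hSd
  calc ⟪T x, (y : F)⟫ = ⟪S x', (y : F)⟫ := by rw [hTx]
    _ = (starRingEnd ℂ) ⟪(y : F), S x'⟫ := (inner_conj_symm _ _).symm
    _ = (starRingEnd ℂ) ⟪S.adjoint y, (x' : E)⟫ := by rw [hfa y x']
    _ = ⟪(x' : E), S.adjoint y⟫ := inner_conj_symm _ _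
    _ = ⟪(x : E), S.adjoint y⟫ := by rw [← hx']

theorem eq_of_isSelfAdjoint_le {A C : E →ₗ.[ℂ] E} (hA : IsSelfAdjoint A)
    (hC : IsSelfAdjoint C) (h : A ≤ C) : A = C := by
  have hAd := hA.dense_domain
  have hCd := hC.dense_domain
  have h2 : C.adjoint ≤ A.adjoint := adjoint_antitone hAd hCd h
  rw [isSelfAdjoint_def] at hA hC
  refine le_antisymm h ?_
  rwa [hA, hC] at h2


end hilbert2

end LinearPMap

/-- Let `T` and `S` be closed densely defined unbounded operators from `H₁` to `H₂` with
`T ⊆ S`.  Then the following are equivalent: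
(i) `D(T) = D(S)` (equivalently, `T = S`);
(ii) `T*T = S*S`;
(iii) the Gaffney-type operator `T*S` (with natural domain `{u ∈ D(S) : Su ∈ D(T*)}`)
is self-adjoint. -/
theorem tfae_gaffney {H₁ H₂ : Type*}
    [NormedAddCommGroup H₁] [InnerProductSpace ℂ H₁] [CompleteSpace H₁]
    [NormedAddCommGroup H₂] [InnerProductSpace ℂ H₂] [CompleteSpace H₂]
    (T S : H₁ →ₗ.[ℂ] H₂)
    (hTclosed : T.IsClosed) (hSclosed : S.IsClosed)
    (hTdense : Dense (T.domain : Set H₁)) (hSdense : Dense (S.domain : Set H₁))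
    (hTS : T ≤ S) :
    [T.domain = S.domain,
      T = S,
      T.adjoint.pcomp T = S.adjoint.pcomp S,
      IsSelfAdjoint (T.adjoint.pcomp S)].TFAE := by
  tfae_have 1 → 2 := fun h => LinearPMap.eq_of_le_of_domain_eq hTS h
  tfae_have 2 → 1 := fun h => by rw [h]
  tfae_have 2 → 3 := fun h => by rw [h]
  tfae_have 2 → 4 := by
    intro h
    rw [h]
    exact LinearPMap.vonNeumann_selfAdjoint S hSclosed hSdense
  tfae_have 4 → 3 := by
    intro h4
    have hTT := LinearPMap.vonNeumann_selfAdjoint T hTclosed hTdense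
    have hSS := LinearPMap.vonNeumann_selfAdjoint S hSclosed hSdense
    have hST : S.adjoint ≤ T.adjoint := LinearPMap.adjoint_antitone hTdense hSdense hTS
    have h1 : T.adjoint.pcomp T ≤ T.adjoint.pcomp S :=
      LinearPMap.pcomp_le_pcomp (le_refl _) hTS
    have h2 : S.adjoint.pcomp S ≤ T.adjoint.pcomp S :=
      LinearPMap.pcomp_le_pcomp hST (le_refl _)
    have e1 : T.adjoint.pcomp T = T.adjoint.pcomp S :=
      LinearPMap.eq_of_isSelfAdjoint_le hTT h4 h1
    have e2 : S.adjoint.pcomp S = T.adjoint.pcomp S :=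
      LinearPMap.eq_of_isSelfAdjoint_le hSS h4 h2
    rw [e1, e2]
  tfae_have 3 → 2 := by
    intro h3
    refine le_antisymm hTS (LinearPMap.le_of_le_graph ?_)
    intro p hp
    have hcl := LinearPMap.graph_le_closure_pcomp S hSclosed hSdense hp
    have hsub : (((S.domRestrict (S.adjoint.pcomp S).domain).graph :
          Submodule ℂ (H₁ × H₂)) : Set (H₁ × H₂)) ⊆ (T.graph : Set (H₁ × H₂)) := by
      intro r hr
      rw [SetLike.mem_coe, LinearPMap.mem_graph_iff] at hr
      obtain ⟨y, hy1, hy2⟩ := hr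
      have hyB : (y : H₁) ∈ (S.adjoint.pcomp S).domain := y.2.1
      have hyS : (y : H₁) ∈ S.domain := y.2.2
      have hyT : (y : H₁) ∈ T.domain := by
        have hyB' : (y : H₁) ∈ (T.adjoint.pcomp T).domain := by rw [h3]; exact hyB
        exact ((LinearPMap.mem_pcomp_domain _ _).mp hyB').1
      have hval : (S.domRestrict (S.adjoint.pcomp S).domain) y = T ⟨(y : H₁), hyT⟩ := by
        have hd : (S.domRestrict (S.adjoint.pcomp S).domain) y = S ⟨(y : H₁), hyS⟩ :=
          LinearPMap.domRestrict_apply rfl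
        rw [hd]
        exact (hTS.2 (x := ⟨(y : H₁), hyT⟩) (y := ⟨(y : H₁), hyS⟩) rfl).symm
      rw [SetLike.mem_coe, LinearPMap.mem_graph_iff]
      exact ⟨⟨(y : H₁), hyT⟩, hy1, by rw [← hval]; exact hy2⟩
    have hmem : p ∈ closure (T.graph : Set (H₁ × H₂)) := closure_mono hsub hcl
    rwa [hTclosed.closure_eq] at hmem
  tfae_finish
end
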